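/- Let x^ALG be the (nonnegative, almost-core-feasible) allocation produced by Algorithm 1 for an MST game, and let x^OPT be any nonnegative almost core allocation. Then x^OPT(N) ≤ 2 · x^ALG(N). Equivalently, Algorithm 1 is a 2-approximation for maximizing x(N) over { x ≥ 0 : x(S) ≤ c(S) for all S ⊊ N }. -/
import Mathlib

open Finset

/-- Algorithm 1 is a 2-approximation for maximizing x(N) over the nonnegative
almost core of an MST game. Players are Fin (n+1), last player `Fin.last n`. Hypotheses are
the properties of the Algorithm 1 output: nonnegative, almost-core-feasible,
x^ALG(N∖{last}) = c(N∖{last}), and some k* ≠ last with x^ALG(N∖{k*}) = c(N∖{k*}).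
Then any nonnegative almost core allocation x^OPT satisfies x^OPT(N) ≤ 2·x^ALG(N). -/
theorem mst_algo_two_approx {n : ℕ} (hn : 1 ≤ n)
    (c : Finset (Fin (n + 1)) → ℝ)
    (xALG xOPT : Fin (n + 1) → ℝ)
    (hAnn : ∀ i, 0 ≤ xALG i)
    (hAfeas : ∀ S : Finset (Fin (n + 1)), S ⊂ univ → ∑ i ∈ S, xALG i ≤ c S)
    (hAlast : ∑ i ∈ univ.erase (Fin.last n), xALG i = c (univ.erase (Fin.last n)))
    (hAk : ∃ k : Fin (n + 1), k ≠ Fin.last n ∧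
      ∑ i ∈ univ.erase k, xALG i = c (univ.erase k))
    (hOnn : ∀ i, 0 ≤ xOPT i)
    (hOfeas : ∀ S : Finset (Fin (n + 1)), S ⊂ univ → ∑ i ∈ S, xOPT i ≤ c S) :
    ∑ i, xOPT i ≤ 2 * ∑ i, xALG i := by
  obtain ⟨k, hk, hAkeq⟩ := hAk
  have herase_ss : ∀ j : Fin (n + 1), univ.erase j ⊂ univ := fun j =>
    erase_ssubset (mem_univ j)
  have hsum_erase : ∀ (x : Fin (n + 1) → ℝ) (j : Fin (n + 1)),
      ∑ i ∈ univ.erase j, x i = (∑ i, x i) - x j := by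
    intro x j
    rw [sum_erase_eq_sub (mem_univ j)]
  have hAle : ∀ j : Fin (n + 1), ∑ i ∈ univ.erase j, xALG i ≤ ∑ i, xALG i := by
    intro j
    rw [hsum_erase]
    linarith [hAnn j]
  -- xOPT(N \ last) ≤ xALG(N)
  have h1 : ∑ i ∈ univ.erase (Fin.last n), xOPT i ≤ ∑ i, xALG i :=
    le_trans ((hOfeas _ (herase_ss _)).trans_eq hAlast.symm) (hAle _)
  -- xOPT(last) ≤ xOPT(N \ k) ≤ xALG(N)
  have hlast_mem : Fin.last n ∈ univ.erase k := by
    simp [Ne.symm hk]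
  have h2a : xOPT (Fin.last n) ≤ ∑ i ∈ univ.erase k, xOPT i :=
    single_le_sum (fun i _ => hOnn i) hlast_mem
  have h2 : xOPT (Fin.last n) ≤ ∑ i, xALG i :=
    h2a.trans (le_trans ((hOfeas _ (herase_ss _)).trans_eq hAkeq.symm) (hAle _))
  have := hsum_erase xOPT (Fin.last n)
  linarith
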